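/- Let p be a prime and m ≥ 1, and let V = ((Fin m → ZMod p) → ℂ). For j ∈ Fin m let S_j be the linear operator on V given by (S_j f)(x) = f(x − e_j) (translation by the j-th standard basis vector), and for j ∈ Fin m with j + 1 < m let U_j be the linear operator (U_j f)(x) = f(x − (x j) • e_{j+1}) (subtracting the j-th coordinate from the (j+1)-st). For j ∈ Fin m set C_j = ∑_{r ∈ ZMod p} S_j ^ (r.val). Then a linear endomorphism A of V commutes with every S_j (j ∈ Fin m) and with every U_j (j with j+1 < m) if and only if A lies in the ℂ-linear span of the identity together with the operators S_s ^ (r.val) ∘ C_{s+1} ∘ C_{s+2} ∘ ⋯ ∘ C_{m−1} for s ∈ Fin m and r ∈ ZMod p with r ≠ 0. Moreover the space of such operators A has dimension m(p−1) + 1 over ℂ. -/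

import Mathlib

/-- The (ordered) product `C t * C (t+1) * ⋯ * C (m-1)` of a family of
endomorphisms indexed by `Fin m`, starting from index `t`. -/
def prodFrom {m : ℕ} {V : Type*} [AddCommGroup V] [Module ℂ V]
    (C : Fin m → Module.End ℂ V) (t : ℕ) : Module.End ℂ V :=
  (((List.finRange m).filter fun j : Fin m => t ≤ j.val).map C).prod

namespace Stmt7

variable {p m : ℕ} [NeZero p]
set_option linter.unusedSectionVars false

/-- Translation operator. -/
def T (a : Fin m → ZMod p) : Module.End ℂ ((Fin m → ZMod p) → ℂ) where
  toFun f := fun x => f (x - a)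
  map_add' _ _ := rfl
  map_smul' _ _ := rfl

@[simp] lemma T_apply (a : Fin m → ZMod p) (f : (Fin m → ZMod p) → ℂ) (x) :
    T a f x = f (x - a) := rfl

lemma T_zero : T (0 : Fin m → ZMod p) = 1 :=
  LinearMap.ext fun f => funext fun x => by simp

lemma T_add (a b : Fin m → ZMod p) : T (a + b) = T a * T b :=
  LinearMap.ext fun f => funext fun x => by
    simp [Module.End.mul_apply, sub_sub]

lemma T_comm (a b : Fin m → ZMod p) : T a * T b = T b * T a := by
  rw [← T_add, ← T_add, add_comm]

lemma T_pow (a : Fin m → ZMod p) (k : ℕ) : T a ^ k = T (k • a) := by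
  induction k with
  | zero => simp [T_zero]
  | succ k ih => rw [pow_succ, ih, succ_nsmul, T_add]

/-- Delta function at `b`. -/
def dd (b : Fin m → ZMod p) : (Fin m → ZMod p) → ℂ := Pi.single b 1

lemma sub_eq_iff' {G : Type*} [AddCommGroup G] (x a b : G) : (x - a = b) ↔ (a = x - b) :=
  ⟨fun h => by rw [← h, sub_sub_cancel], fun h => by rw [h, sub_sub_cancel]⟩

lemma T_dd (a b : Fin m → ZMod p) : T a (dd b) = dd (b + a) := by
  funext x
  simp only [T_apply, dd, Pi.single_apply]
  congr 1
  rw [eq_iff_iff, sub_eq_iff_eq_add]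

/-- The convolution map. -/
noncomputable def Phi : ((Fin m → ZMod p) → ℂ) →ₗ[ℂ] Module.End ℂ ((Fin m → ZMod p) → ℂ) where
  toFun c := ∑ a, c a • T a
  map_add' c d := by simp [add_smul, Finset.sum_add_distrib]
  map_smul' t c := by simp [smul_smul, Finset.smul_sum]

lemma Phi_apply (c : (Fin m → ZMod p) → ℂ) : Phi c = ∑ a, c a • T a := rfl

lemma Phi_dd (c : (Fin m → ZMod p) → ℂ) (b : Fin m → ZMod p) :
    Phi c (dd b) = T b c := by
  funext x
  rw [Phi_apply]
  simp only [LinearMap.sum_apply, LinearMap.smul_apply, Finset.sum_apply,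
    Pi.smul_apply, T_apply, dd, Pi.single_apply, smul_eq_mul, mul_ite, mul_one, mul_zero]
  simp only [show ∀ a, (x - a = b) = (a = x - b) from fun a => eq_iff_iff.2 (sub_eq_iff' x a b)]
  rw [Finset.sum_ite_eq' Finset.univ (x - b) c]
  simp

lemma Phi_injective : Function.Injective (Phi : ((Fin m → ZMod p) → ℂ) →ₗ[ℂ] _) := by
  intro c d h
  have := congrArg (fun A : Module.End ℂ ((Fin m → ZMod p) → ℂ) => A (dd 0)) h
  simpa [Phi_dd, T_zero] using this

lemma commute_T_of (A : Module.End ℂ ((Fin m → ZMod p) → ℂ))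
    (h : ∀ j : Fin m, Commute A (T (Pi.single j (1 : ZMod p)))) (a : Fin m → ZMod p) :
    Commute A (T a) := by
  have hsingle : ∀ (j : Fin m) (v : ZMod p), Commute A (T (Pi.single j v)) := by
    intro j v
    have h1 : Pi.single j v = (v.val • Pi.single j (1 : ZMod p) : Fin m → ZMod p) := by
      rw [← Pi.single_smul]
      congr 1
      simp [nsmul_eq_mul, ZMod.natCast_val, ZMod.cast_id]
    rw [h1, ← T_pow]
    exact (h j).pow_right _
  have key : ∀ s : Finset (Fin m), Commute A (T (∑ j ∈ s, Pi.single j (a j))) := by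
    intro s
    induction s using Finset.induction_on with
    | empty => simpa [T_zero] using Commute.one_right A
    | insert _ _ hj ih =>
      rw [Finset.sum_insert hj, T_add]
      exact (hsingle _ _).mul_right ih
  have := key Finset.univ
  rwa [Finset.univ_sum_single] at this

lemma A_eq_Phi (A : Module.End ℂ ((Fin m → ZMod p) → ℂ))
    (h : ∀ a, Commute A (T a)) : A = Phi (A (dd 0)) := by
  refine Module.Basis.ext (Pi.basisFun ℂ (Fin m → ZMod p)) fun b => ?_
  have hb : (Pi.basisFun ℂ (Fin m → ZMod p)) b = dd b := by
    simp [Pi.basisFun_apply, dd]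
  rw [hb, Phi_dd]
  have : dd b = T b (dd 0) := by rw [T_dd, zero_add]
  rw [this, ← Module.End.mul_apply, (h b).eq, Module.End.mul_apply]

lemma Phi_comm_T (c : (Fin m → ZMod p) → ℂ) (b : Fin m → ZMod p) :
    Phi c * T b = T b * Phi c := by
  rw [Phi_apply, Finset.sum_mul, Finset.mul_sum]
  exact Finset.sum_congr rfl fun a _ => by
    rw [smul_mul_assoc, mul_smul_comm, T_comm]


section Tau

def jsucc (j : Fin m) (h : (j : ℕ) + 1 < m) : Fin m := ⟨(j : ℕ) + 1, h⟩

lemma j_ne_jsucc (j : Fin m) (h : (j : ℕ) + 1 < m) : j ≠ jsucc j h := by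
  intro hh
  have := congrArg Fin.val hh
  simp [jsucc] at this

def tau (j : Fin m) (h : (j : ℕ) + 1 < m) (x : Fin m → ZMod p) : Fin m → ZMod p :=
  x - Pi.single (jsucc j h) (x j)

lemma tau_apply_ne (j : Fin m) (h : (j : ℕ) + 1 < m) (x : Fin m → ZMod p)
    {t : Fin m} (ht : t ≠ jsucc j h) : tau j h x t = x t := by
  simp [tau, Pi.single_eq_of_ne ht]

lemma tau_apply_succ (j : Fin m) (h : (j : ℕ) + 1 < m) (x : Fin m → ZMod p) :
    tau j h x (jsucc j h) = x (jsucc j h) - x j := by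
  simp [tau]

lemma tau_sub (j : Fin m) (h : (j : ℕ) + 1 < m) (x y : Fin m → ZMod p) :
    tau j h (x - y) = tau j h x - tau j h y := by
  funext t
  by_cases ht : t = jsucc j h
  · subst ht
    simp only [tau_apply_succ, Pi.sub_apply]
    ring
  · simp [tau_apply_ne _ _ _ ht]

def tauEquiv (j : Fin m) (h : (j : ℕ) + 1 < m) : (Fin m → ZMod p) ≃ (Fin m → ZMod p) where
  toFun := tau j h
  invFun x := x + Pi.single (jsucc j h) (x j)
  left_inv x := by
    have h1 : tau j h x j = x j := tau_apply_ne j h x (j_ne_jsucc j h)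
    show tau j h x + Pi.single (jsucc j h) (tau j h x j) = x
    rw [h1]
    show x - Pi.single (jsucc j h) (x j) + Pi.single (jsucc j h) (x j) = x
    abel
  right_inv x := by
    set y : Fin m → ZMod p := x + Pi.single (jsucc j h) (x j) with hy
    have h1 : y j = x j := by
      rw [hy]
      simp [Pi.single_eq_of_ne (j_ne_jsucc j h)]
    show y - Pi.single (jsucc j h) (y j) = x
    rw [h1, hy]
    abel

lemma tauEquiv_apply (j : Fin m) (h : (j : ℕ) + 1 < m) (x : Fin m → ZMod p) :
    tauEquiv j h x = tau j h x := rfl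

def Uop (j : Fin m) (h : (j : ℕ) + 1 < m) : Module.End ℂ ((Fin m → ZMod p) → ℂ) where
  toFun f := fun x => f (tau j h x)
  map_add' _ _ := rfl
  map_smul' _ _ := rfl

lemma Uop_apply (j : Fin m) (h : (j : ℕ) + 1 < m) (f : (Fin m → ZMod p) → ℂ) (x) :
    Uop j h f x = f (tau j h x) := rfl

lemma T_mul_Uop (j : Fin m) (h : (j : ℕ) + 1 < m) (a : Fin m → ZMod p) :
    T a * Uop j h = Uop j h * T (tau j h a) :=
  LinearMap.ext fun f => funext fun x => by
    simp only [Module.End.mul_apply, T_apply, Uop_apply]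
    rw [tau_sub]

lemma Uop_cancel (j : Fin m) (h : (j : ℕ) + 1 < m)
    {X Y : Module.End ℂ ((Fin m → ZMod p) → ℂ)}
    (hxy : Uop j h * X = Uop j h * Y) : X = Y := by
  refine LinearMap.ext fun f => funext fun y => ?_
  have := congrFun (congrArg (fun B : Module.End ℂ ((Fin m → ZMod p) → ℂ) => B f)
    hxy) ((tauEquiv j h).symm y)
  simp only [Module.End.mul_apply, Uop_apply] at this
  have hy : tau j h ((tauEquiv j h).symm y) = y := (tauEquiv j h).apply_symm_apply y
  rw [hy] at this
  exact this

lemma Phi_mul_Uop (j : Fin m) (h : (j : ℕ) + 1 < m) (c : (Fin m → ZMod p) → ℂ) :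
    Phi c * Uop j h = Uop j h * Phi (fun b => c ((tauEquiv j h).symm b)) := by
  calc Phi c * Uop j h = ∑ a, c a • (T a * Uop j h) := by
        rw [Phi_apply, Finset.sum_mul]
        exact Finset.sum_congr rfl fun a _ => smul_mul_assoc _ _ _
    _ = ∑ a, c a • (Uop j h * T (tau j h a)) := by
        exact Finset.sum_congr rfl fun a _ => by rw [T_mul_Uop]
    _ = ∑ b, c ((tauEquiv j h).symm b) • (Uop j h * T b) := by
        exact Fintype.sum_equiv (tauEquiv j h) _ _
          (fun a => by rw [Equiv.symm_apply_apply, tauEquiv_apply])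
    _ = Uop j h * ∑ b, c ((tauEquiv j h).symm b) • T b := by
        rw [Finset.mul_sum]
        exact Finset.sum_congr rfl fun b _ => (mul_smul_comm _ _ _).symm
    _ = Uop j h * Phi (fun b => c ((tauEquiv j h).symm b)) := by rw [Phi_apply]

lemma Phi_mul_Uop_of_inv (j : Fin m) (h : (j : ℕ) + 1 < m) (c : (Fin m → ZMod p) → ℂ)
    (hc : ∀ x, c (tau j h x) = c x) : Phi c * Uop j h = Uop j h * Phi c := by
  rw [Phi_mul_Uop]
  congr 1
  congr 1
  funext b
  rw [show c b = c (tau j h ((tauEquiv j h).symm b)) by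
    rw [show tau j h ((tauEquiv j h).symm b) = b from (tauEquiv j h).apply_symm_apply b],
    hc]

lemma inv_of_comm (j : Fin m) (h : (j : ℕ) + 1 < m) (c : (Fin m → ZMod p) → ℂ)
    (hcomm : Phi c * Uop j h = Uop j h * Phi c) : ∀ x, c (tau j h x) = c x := by
  rw [Phi_mul_Uop] at hcomm
  have h1 := Phi_injective (Uop_cancel j h hcomm)
  intro x
  have h2 := congrFun h1 (tauEquiv j h x)
  simp only [Equiv.symm_apply_apply] at h2
  rw [← tauEquiv_apply, h2]

end Tau

section Indicators

variable [Fact p.Prime]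

/-- Indicator of functions whose first nonzero coordinate is `s` with value `r`. -/
noncomputable def chi (s : Fin m) (r : ZMod p) : (Fin m → ZMod p) → ℂ :=
  fun a => if a s = r ∧ (∀ t, t < s → a t = 0) then 1 else 0

/-- Indicator of `0`. -/
noncomputable def d0 : (Fin m → ZMod p) → ℂ := fun a => if a = 0 then 1 else 0

/-- Indicator of vanishing below level `t`. -/
noncomputable def w (t : ℕ) : (Fin m → ZMod p) → ℂ :=
  fun a => if (∀ u : Fin m, (u : ℕ) < t → a u = 0) then 1 else 0

lemma jlt (j : Fin m) (h : (j : ℕ) + 1 < m) : j < jsucc j h := by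
  rw [Fin.lt_def]; simp [jsucc]

lemma chi_inv (s : Fin m) (r : ZMod p) (j : Fin m) (h : (j : ℕ) + 1 < m)
    (x : Fin m → ZMod p) : chi s r (tau j h x) = chi s r x := by
  unfold chi
  refine if_congr ?_ rfl rfl
  constructor
  · rintro ⟨h1, h2⟩
    have hxlow : ∀ t, t < s → x t = 0 := by
      intro t ht
      by_cases htj : t = jsucc j h
      · have hjs : j < s := lt_trans (jlt j h) (htj ▸ ht)
        have hxj : x j = 0 := by
          have := h2 j hjs
          rwa [tau_apply_ne j h x (Fin.ne_of_lt (jlt j h))] at this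
        have := h2 t ht
        rw [htj, tau_apply_succ, hxj, sub_zero] at this
        rw [htj]; exact this
      · have := h2 t ht
        rwa [tau_apply_ne j h x htj] at this
    refine ⟨?_, hxlow⟩
    by_cases hs : s = jsucc j h
    · have hjs : j < s := hs ▸ jlt j h
      have hxj : x j = 0 := hxlow j hjs
      have := h1
      rw [hs, tau_apply_succ, hxj, sub_zero] at this
      rw [hs]; exact this
    · rwa [tau_apply_ne j h x hs] at h1
  · rintro ⟨h1, h2⟩
    have hlow : ∀ t, t < s → tau j h x t = 0 := by
      intro t ht
      by_cases htj : t = jsucc j h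
      · have hjs : j < s := lt_trans (jlt j h) (htj ▸ ht)
        rw [htj, tau_apply_succ, h2 j hjs, sub_zero]
        exact htj ▸ h2 t ht
      · rw [tau_apply_ne j h x htj]; exact h2 t ht
    refine ⟨?_, hlow⟩
    by_cases hs : s = jsucc j h
    · have hjs : j < s := hs ▸ jlt j h
      rw [hs, tau_apply_succ, h2 j hjs, sub_zero]
      exact hs ▸ h1
    · rw [tau_apply_ne j h x hs]; exact h1

lemma d0_inv (j : Fin m) (h : (j : ℕ) + 1 < m) (x : Fin m → ZMod p) :
    d0 (tau j h x) = d0 x := by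
  unfold d0
  refine if_congr ?_ rfl rfl
  constructor
  · intro htau
    have hxj : x j = 0 := by
      have := congrFun htau j
      rwa [tau_apply_ne j h x (Fin.ne_of_lt (jlt j h))] at this
    funext t
    by_cases htj : t = jsucc j h
    · have := congrFun htau (jsucc j h)
      rw [tau_apply_succ, hxj, sub_zero] at this
      rw [htj]; exact this
    · have := congrFun htau t
      rwa [tau_apply_ne j h x htj] at this
  · intro hx
    subst hx
    funext t
    by_cases htj : t = jsucc j h
    · rw [htj, tau_apply_succ]; simp
    · rw [tau_apply_ne j h _ htj]

/-- The basic move: if `a j ≠ 0` then the value of an invariant function does not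
depend on the coordinate `j+1`. -/
lemma move {c : (Fin m → ZMod p) → ℂ}
    (hc : ∀ (j : Fin m) (h : (j : ℕ) + 1 < m) (x), c (tau j h x) = c x)
    (j : Fin m) (h : (j : ℕ) + 1 < m) (a : Fin m → ZMod p) (ha : a j ≠ 0)
    (v : ZMod p) : c (Function.update a (jsucc j h) v) = c a := by
  have tau_upd : ∀ b : Fin m → ZMod p,
      tau j h b = Function.update b (jsucc j h) (b (jsucc j h) - b j) := by
    intro b
    funext t
    by_cases ht : t = jsucc j h
    · subst ht; rw [tau_apply_succ, Function.update_self]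
    · rw [tau_apply_ne j h b ht, Function.update_of_ne ht]
  have key : ∀ k : ℕ,
      c (Function.update a (jsucc j h) (a (jsucc j h) - k • a j)) = c a := by
    intro k
    induction k with
    | zero => simp [Function.update_eq_self]
    | succ k ih =>
      have h2 := hc j h (Function.update a (jsucc j h) (a (jsucc j h) - k • a j))
      rw [tau_upd, Function.update_self,
        Function.update_of_ne (Fin.ne_of_lt (jlt j h)),
        Function.update_idem] at h2
      rw [ih] at h2
      rw [show a (jsucc j h) - k • a j - a j = a (jsucc j h) - (k + 1) • a j by
        rw [succ_nsmul, sub_sub]] at h2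
      exact h2
  have hv : a (jsucc j h) - ((((a (jsucc j h) - v) * (a j)⁻¹).val : ℕ) • a j) = v := by
    rw [nsmul_eq_mul, ZMod.natCast_val, ZMod.cast_id, mul_assoc,
      inv_mul_cancel₀ ha, mul_one, sub_sub_cancel]
  rw [← hv]
  exact key _

/-- Connectivity: an invariant function is constant on each "orbit"
`{a | a s = r, a t = 0 for t < s}`. -/
lemma connect {c : (Fin m → ZMod p) → ℂ}
    (hc : ∀ (j : Fin m) (h : (j : ℕ) + 1 < m) (x), c (tau j h x) = c x)
    (s : Fin m) (r : ZMod p) (hr : r ≠ 0) (a : Fin m → ZMod p)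
    (has : a s = r) (h0 : ∀ t, t < s → a t = 0) : c a = c (Pi.single s r) := by
  have P : ∀ d : ℕ, ∀ a b : Fin m → ZMod p,
      a s = r → (∀ t, t < s → a t = 0) →
      b s = r → (∀ t, t < s → b t = 0) →
      (∀ t : Fin m, (s : ℕ) + 1 + d ≤ (t : ℕ) → a t = b t) → c a = c b := by
    intro d
    induction d with
    | zero =>
      intro a b ha1 ha2 hb1 hb2 hab
      have hab' : a = b := by
        funext t
        rcases lt_trichotomy ((t : ℕ)) ((s : ℕ)) with ht | ht | ht
        · rw [ha2 t (Fin.lt_def.2 ht), hb2 t (Fin.lt_def.2 ht)]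
        · have hts : t = s := Fin.ext ht
          rw [hts, ha1, hb1]
        · exact hab t (by omega)
      rw [hab']
    | succ d ih =>
      intro a b ha1 ha2 hb1 hb2 hab
      by_cases hn : (s : ℕ) + 1 + d < m
      case neg =>
        exact ih a b ha1 ha2 hb1 hb2 (fun t _ => absurd t.isLt (by omega))
      case pos =>
        set n : ℕ := (s : ℕ) + 1 + d with hn'
        let jp : Fin m := ⟨n - 1, by omega⟩
        have hjp1 : (jp : ℕ) + 1 < m := by
          show (n - 1) + 1 < m
          omega
        let jn : Fin m := ⟨n, hn⟩
        have hjpv : (jp : ℕ) = n - 1 := rfl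
        have hjnv : (jn : ℕ) = n := rfl
        have hjpsucc : jsucc jp hjp1 = jn := by
          apply Fin.ext
          show (n - 1) + 1 = n
          omega
        have hsjp : (s : ℕ) ≤ (jp : ℕ) := by
          show (s : ℕ) ≤ n - 1
          omega
        have hjplt : (jp : ℕ) < n := by
          show n - 1 < n
          omega
        set val : ZMod p := if jp = s then r else 1 with hval'
        have hval : val ≠ 0 := by
          rw [hval']
          split
          · exact hr
          · exact one_ne_zero
        -- updating at jp preserves the constraints
        have upd_cond : ∀ x : Fin m → ZMod p, x s = r → (∀ t, t < s → x t = 0) →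
            (Function.update x jp val s = r ∧
              ∀ t, t < s → Function.update x jp val t = 0) := by
          intro x hx1 hx2
          constructor
          · by_cases hsp : jp = s
            · rw [hsp, Function.update_self, hval', if_pos hsp]
            · rw [Function.update_of_ne (fun hh => hsp hh.symm), hx1]
          · intro t ht
            have htjp : t ≠ jp := by
              intro hh
              rw [Fin.lt_def, hh] at ht
              omega
            rw [Function.update_of_ne htjp, hx2 t ht]
        have hconda := upd_cond a ha1 ha2
        have hcondb := upd_cond b hb1 hb2
        -- step 1 : c a = c a', c b = c b' via induction hypothesis
        have hstep : ∀ x : Fin m → ZMod p,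
            (∀ t : Fin m, n ≤ (t : ℕ) → x t = Function.update x jp val t) := by
          intro x t ht
          have : t ≠ jp := by
            intro hh
            rw [hh] at ht
            omega
          rw [Function.update_of_ne this]
        have h1 : c a = c (Function.update a jp val) :=
          ih a _ ha1 ha2 hconda.1 hconda.2 (hstep a)
        have h2 : c b = c (Function.update b jp val) :=
          ih b _ hb1 hb2 hcondb.1 hcondb.2 (hstep b)
        -- step 2 : move coordinate jn of a' to b's value
        have ha'jp : Function.update a jp val jp = val := Function.update_self _ _ _
        have hmv := move hc jp hjp1 (Function.update a jp val)
          (by rw [ha'jp]; exact hval) (b jn)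
        rw [hjpsucc] at hmv
        -- step 3 : compare via induction hypothesis
        have hsn : s ≠ jn := by
          intro hh
          have := congrArg Fin.val hh
          omega
        have hjnjp : jn ≠ jp := by
          intro hh
          have := congrArg Fin.val hh
          omega
        have ha''1 : Function.update (Function.update a jp val) jn (b jn) s = r := by
          rw [Function.update_of_ne hsn]
          exact hconda.1
        have ha''2 : ∀ t, t < s →
            Function.update (Function.update a jp val) jn (b jn) t = 0 := by
          intro t ht
          have htn : t ≠ jn := by
            intro hh
            rw [Fin.lt_def, hh] at ht
            omega
          rw [Function.update_of_ne htn]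
          exact hconda.2 t ht
        have h3 : c (Function.update (Function.update a jp val) jn (b jn)) =
            c (Function.update b jp val) := by
          refine ih _ _ ha''1 ha''2 hcondb.1 hcondb.2 fun t ht => ?_
          by_cases htn : t = jn
          · rw [htn, Function.update_self, Function.update_of_ne hjnjp]
          · have htval : n < (t : ℕ) := by
              rcases Nat.lt_or_ge n (t : ℕ) with hlt | hge
              · exact hlt
              · exfalso
                exact htn (Fin.ext (by omega))
            have htjp : t ≠ jp := by
              intro hh
              rw [hh] at htval
              omega
            rw [Function.update_of_ne htn, Function.update_of_ne htjp,
              Function.update_of_ne htjp]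
            exact hab t (by omega)
        rw [h1, ← hmv, h3, ← h2]
  refine (P m a (Pi.single s r) has h0 (by simp)
    (fun t ht => by rw [Pi.single_eq_of_ne (Fin.ne_of_lt ht)])
    (fun t _ => absurd t.isLt (by omega)))

lemma Phi_d0 : Phi (d0 : (Fin m → ZMod p) → ℂ) = 1 := by
  rw [Phi_apply]
  have h1 : ∀ a : Fin m → ZMod p, d0 a • T a = if a = 0 then T a else 0 := by
    intro a
    unfold d0
    split <;> simp
  rw [Finset.sum_congr rfl fun a _ => h1 a, Finset.sum_ite_eq' Finset.univ 0 T]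
  simp [T_zero]

lemma w_sum (t : ℕ) (ht : t < m) (b : Fin m → ZMod p) :
    ∑ v : ZMod p, w (t + 1) (b - Pi.single (⟨t, ht⟩ : Fin m) v) = w t b := by
  set jt : Fin m := ⟨t, ht⟩ with hjt
  have hcond : ∀ v : ZMod p,
      (∀ u : Fin m, (u : ℕ) < t + 1 → (b - Pi.single jt v : Fin m → ZMod p) u = 0) ↔
      ((∀ u : Fin m, (u : ℕ) < t → b u = 0) ∧ v = b jt) := by
    intro v
    constructor
    · intro H
      constructor
      · intro u hu
        have hne : u ≠ jt := by
          intro hh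
          rw [hh] at hu
          simp [hjt] at hu
        have := H u (by omega)
        rwa [Pi.sub_apply, Pi.single_eq_of_ne hne, sub_zero] at this
      · have := H jt (by simp [hjt])
        rw [Pi.sub_apply, Pi.single_eq_same] at this
        exact (sub_eq_zero.mp this).symm
    · rintro ⟨H, rfl⟩ u hu
      by_cases hne : u = jt
      · rw [hne, Pi.sub_apply, Pi.single_eq_same, sub_self]
      · rw [Pi.sub_apply, Pi.single_eq_of_ne hne, sub_zero]
        have hut : (u : ℕ) ≠ t := fun hh => hne (Fin.ext (by simp [hjt, hh]))
        exact H u (by omega)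
  unfold w
  rw [Finset.sum_congr rfl fun v _ => if_congr (hcond v) rfl rfl]
  by_cases hQ : ∀ u : Fin m, (u : ℕ) < t → b u = 0
  · rw [if_pos hQ,
      Finset.sum_congr rfl fun v _ => if_congr (and_iff_right hQ) rfl rfl,
      Finset.sum_ite_eq' Finset.univ (b jt) (fun _ => (1 : ℂ))]
    simp
  · rw [if_neg hQ,
      Finset.sum_congr rfl fun v (_ : v ∈ Finset.univ) =>
        if_neg (fun hh => hQ hh.1),
      Finset.sum_const_zero]

lemma C_mul_Phi_w (t : ℕ) (ht : t < m) :
    (∑ v : ZMod p, T (Pi.single (⟨t, ht⟩ : Fin m) v)) * Phi (w (t + 1)) = Phi (w t) := by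
  set jt : Fin m := ⟨t, ht⟩ with hjt
  calc (∑ v : ZMod p, T (Pi.single jt v)) * Phi (w (t + 1))
      = ∑ v : ZMod p, ∑ a, w (t + 1) a • T (Pi.single jt v + a) := by
        rw [Phi_apply, Finset.sum_mul]
        refine Finset.sum_congr rfl fun v _ => ?_
        rw [Finset.mul_sum]
        refine Finset.sum_congr rfl fun a _ => ?_
        rw [mul_smul_comm, T_add]
    _ = ∑ v : ZMod p, ∑ b, w (t + 1) (b - Pi.single jt v) • T b := by
        refine Finset.sum_congr rfl fun v _ => ?_
        refine Fintype.sum_equiv (Equiv.addLeft (Pi.single jt v)) _ _ fun a => ?_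
        simp only [Equiv.coe_addLeft]
        rw [add_sub_cancel_left]
    _ = ∑ b, (∑ v : ZMod p, w (t + 1) (b - Pi.single jt v)) • T b := by
        rw [Finset.sum_comm]
        exact Finset.sum_congr rfl fun b _ => (Finset.sum_smul).symm
    _ = ∑ b, w t b • T b := by
        refine Finset.sum_congr rfl fun b _ => ?_
        rw [w_sum t ht b]
    _ = Phi (w t) := (Phi_apply _).symm

lemma Phi_chi (s : Fin m) (r : ZMod p) :
    T (Pi.single s r) * Phi (w ((s : ℕ) + 1)) = Phi (chi s r) := by
  have hcoef : ∀ b : Fin m → ZMod p, w ((s : ℕ) + 1) (b - Pi.single s r) = chi s r b := by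
    intro b
    unfold w chi
    refine if_congr ?_ rfl rfl
    constructor
    · intro H
      constructor
      · have := H s (by omega)
        rw [Pi.sub_apply, Pi.single_eq_same] at this
        exact sub_eq_zero.mp this
      · intro u hu
        have hne : u ≠ s := Fin.ne_of_lt hu
        have := H u (by rw [Fin.lt_def] at hu; omega)
        rwa [Pi.sub_apply, Pi.single_eq_of_ne hne, sub_zero] at this
    · rintro ⟨H1, H2⟩ u hu
      by_cases hne : u = s
      · rw [hne, Pi.sub_apply, Pi.single_eq_same, H1, sub_self]
      · rw [Pi.sub_apply, Pi.single_eq_of_ne hne, sub_zero]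
        have hut : (u : ℕ) ≠ (s : ℕ) := fun hh => hne (Fin.ext hh)
        exact H2 u (Fin.lt_def.2 (by omega))
  calc T (Pi.single s r) * Phi (w ((s : ℕ) + 1))
      = ∑ a, w ((s : ℕ) + 1) a • T (Pi.single s r + a) := by
        rw [Phi_apply, Finset.mul_sum]
        refine Finset.sum_congr rfl fun a _ => ?_
        rw [mul_smul_comm, T_add]
    _ = ∑ b, w ((s : ℕ) + 1) (b - Pi.single s r) • T b := by
        refine Fintype.sum_equiv (Equiv.addLeft (Pi.single s r)) _ _ fun a => ?_
        simp only [Equiv.coe_addLeft]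
        rw [add_sub_cancel_left]
    _ = Phi (chi s r) := by
        rw [Phi_apply]
        exact Finset.sum_congr rfl fun b _ => by rw [hcoef b]

lemma range_filter_eq (mm t : ℕ) (ht : t < mm) :
    (List.range mm).filter (fun i => decide (t ≤ i)) =
      t :: (List.range mm).filter (fun i => decide (t + 1 ≤ i)) := by
  induction mm with
  | zero => omega
  | succ mm ih =>
    rw [List.range_succ, List.filter_append, List.filter_append]
    by_cases h2 : t < mm
    · rw [ih h2]
      have e1 : List.filter (fun i => decide (t ≤ i)) [mm] = [mm] := by
        simp; omega
      have e2 : List.filter (fun i => decide (t + 1 ≤ i)) [mm] = [mm] := by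
        simp; omega
      rw [e1, e2, List.cons_append]
    · have h3 : t = mm := by omega
      subst h3
      have e0 : ∀ k : ℕ, (List.range t).filter (fun i => decide (k + t ≤ i)) = [] := by
        intro k
        refine List.filter_eq_nil_iff.2 fun a ha => ?_
        rw [List.mem_range] at ha
        simp
        omega
      have e1 : List.filter (fun i => decide (t ≤ i)) [t] = [t] := by simp
      have e2 : List.filter (fun i => decide (t + 1 ≤ i)) [t] = [] := by simp
      have e3 := e0 0
      have e4 := e0 1
      rw [show (0 + t) = t by omega] at e3
      rw [show (1 + t) = t + 1 by omega] at e4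
      rw [e1, e2, e3, e4]
      rfl

lemma finRange_filter_eq (t : ℕ) (ht : t < m) :
    ((List.finRange m).filter fun j : Fin m => t ≤ (j : ℕ)) =
      (⟨t, ht⟩ : Fin m) :: ((List.finRange m).filter fun j : Fin m => t + 1 ≤ (j : ℕ)) := by
  apply List.map_injective_iff.2 (Fin.val_injective)
  rw [List.map_cons]
  have h1 : ∀ k : ℕ, ((List.finRange m).filter fun j : Fin m => k ≤ (j : ℕ)).map Fin.val
      = (List.range m).filter (fun i => decide (k ≤ i)) := by
    intro k
    rw [← List.map_coe_finRange_eq_range (n := m), List.filter_map]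
    rfl
  rw [h1, h1, range_filter_eq m t ht]

lemma prodFrom_ge {W : Type*} [AddCommGroup W] [Module ℂ W]
    (C : Fin m → Module.End ℂ W) (t : ℕ) (ht : m ≤ t) : prodFrom C t = 1 := by
  unfold prodFrom
  have : ((List.finRange m).filter fun j : Fin m => t ≤ (j : ℕ)) = [] := by
    refine List.filter_eq_nil_iff.2 fun j _ => ?_
    have := j.isLt
    simp
    omega
  rw [this]
  rfl

lemma prodFrom_succ {W : Type*} [AddCommGroup W] [Module ℂ W]
    (C : Fin m → Module.End ℂ W) (t : ℕ) (ht : t < m) :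
    prodFrom C t = C ⟨t, ht⟩ * prodFrom C (t + 1) := by
  unfold prodFrom
  rw [finRange_filter_eq t ht, List.map_cons, List.prod_cons]

lemma w_ge (t : ℕ) (ht : m ≤ t) : (w t : (Fin m → ZMod p) → ℂ) = d0 := by
  funext a
  unfold w d0
  refine if_congr ?_ rfl rfl
  constructor
  · intro H
    funext u
    exact H u (by have := u.isLt; omega)
  · intro H u _
    rw [H]
    rfl

lemma prodFrom_eq_Phi_w (C : Fin m → Module.End ℂ ((Fin m → ZMod p) → ℂ))
    (hC : ∀ j : Fin m, C j = ∑ v : ZMod p, T (Pi.single j v)) (t : ℕ) :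
    prodFrom C t = Phi (w t) := by
  have key : ∀ k t : ℕ, m - t ≤ k → prodFrom C t = Phi (w t) := by
    intro k
    induction k with
    | zero =>
      intro t ht
      rw [prodFrom_ge C t (by omega), w_ge t (by omega), Phi_d0]
    | succ k ih =>
      intro t ht
      by_cases htm : t < m
      · rw [prodFrom_succ C t htm, ih (t + 1) (by omega), hC ⟨t, htm⟩,
          C_mul_Phi_w t htm]
      · rw [prodFrom_ge C t (by omega), w_ge t (by omega), Phi_d0]
  exact key (m - t) t le_rfl

/-- Index type for the basis of the commutant. -/
abbrev Idx (p m : ℕ) := Unit ⊕ (Fin m × {r : ZMod p // r ≠ 0})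

/-- The basis family of the space of invariant coefficient functions. -/
noncomputable def F : Idx p m → ((Fin m → ZMod p) → ℂ) :=
  Sum.elim (fun _ => d0) (fun sr => chi sr.1 sr.2.1)

/-- Distinguishing points. -/
def pt : Idx p m → (Fin m → ZMod p) :=
  Sum.elim (fun _ => 0) (fun sr => Pi.single sr.1 sr.2.1)

lemma single_ne_zero' (s : Fin m) (r : ZMod p) (hr : r ≠ 0) :
    (Pi.single s r : Fin m → ZMod p) ≠ 0 := by
  intro hh
  apply hr
  have := congrFun hh s
  rwa [Pi.single_eq_same] at this

lemma chi_single (s s' : Fin m) (r r' : ZMod p) (hr : r ≠ 0) :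
    chi s r (Pi.single s' r') = if s = s' ∧ r = r' then 1 else 0 := by
  unfold chi
  refine if_congr ?_ rfl rfl
  constructor
  · rintro ⟨h1, -⟩
    by_cases hs : s' = s
    · subst hs
      rw [Pi.single_eq_same] at h1
      exact ⟨rfl, h1.symm⟩
    · rw [Pi.single_eq_of_ne (fun hh => hs hh.symm)] at h1
      exact absurd h1.symm hr
  · rintro ⟨rfl, rfl⟩
    refine ⟨by rw [Pi.single_eq_same], fun t ht => ?_⟩
    rw [Pi.single_eq_of_ne (Fin.ne_of_lt ht)]

lemma F_eval (i i0 : Idx p m) : F i (pt i0) = if i = i0 then 1 else 0 := by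
  rcases i with _ | ⟨s, r, hr⟩ <;> rcases i0 with _ | ⟨s', r', hr'⟩
  · simp [F, pt, d0]
  · rw [if_neg (by simp)]
    simp only [F, pt, Sum.elim_inl, Sum.elim_inr, d0]
    rw [if_neg (single_ne_zero' s' r' hr')]
  · rw [if_neg (by simp)]
    simp only [F, pt, Sum.elim_inl, Sum.elim_inr]
    unfold chi
    rw [if_neg]
    rintro ⟨h1, -⟩
    exact hr h1.symm
  · simp only [F, pt, Sum.elim_inr]
    rw [chi_single s s' r r' hr]
    refine if_congr (by simp [Prod.ext_iff, Subtype.ext_iff]) rfl rfl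

lemma F_li : LinearIndependent ℂ (F : Idx p m → ((Fin m → ZMod p) → ℂ)) := by
  rw [Fintype.linearIndependent_iff]
  intro g hg i0
  have h1 := congrFun hg (pt i0)
  rw [Finset.sum_apply] at h1
  simp only [Pi.smul_apply, smul_eq_mul, F_eval, Pi.zero_apply, mul_ite, mul_one,
    mul_zero] at h1
  rwa [Finset.sum_ite_eq' Finset.univ i0 g, if_pos (Finset.mem_univ i0)] at h1

/-- The submodule of invariant coefficient functions. -/
noncomputable def Wsub (p m : ℕ) [NeZero p] : Submodule ℂ ((Fin m → ZMod p) → ℂ) where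
  carrier := {c | ∀ (j : Fin m) (h : (j : ℕ) + 1 < m) (x), c (tau j h x) = c x}
  add_mem' := fun ha hb j h x => by
    simp only [Pi.add_apply, ha j h x, hb j h x]
  zero_mem' := fun j h x => rfl
  smul_mem' := fun t c hc j h x => by
    simp only [Pi.smul_apply, hc j h x]

lemma decomp {c : (Fin m → ZMod p) → ℂ}
    (hc : ∀ (j : Fin m) (h : (j : ℕ) + 1 < m) (x), c (tau j h x) = c x) :
    c = ∑ i : Idx p m,
      (Sum.elim (fun _ => c 0) (fun sr => c (Pi.single sr.1 sr.2.1)) i) • F i := by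
  funext a
  rw [Finset.sum_apply]
  simp only [Pi.smul_apply, smul_eq_mul]
  by_cases ha : a = 0
  · subst ha
    rw [Fintype.sum_eq_single (Sum.inl () : Idx p m)]
    · simp only [Sum.elim_inl, F]
      unfold d0
      rw [if_pos rfl, mul_one]
    · intro i hi
      rcases i with _ | ⟨s, r, hr⟩
      · exact absurd rfl hi
      · simp only [Sum.elim_inr, F]
        unfold chi
        rw [if_neg, mul_zero]
        rintro ⟨h1, -⟩
        exact hr h1.symm
  · have hne : (Finset.univ.filter (fun t : Fin m => a t ≠ 0)).Nonempty := by
      by_contra h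
      apply ha
      funext t
      by_contra hat
      exact h ⟨t, by simpa using hat⟩
    set s0 := (Finset.univ.filter (fun t : Fin m => a t ≠ 0)).min' hne with hs0'
    have hs0 : a s0 ≠ 0 := by
      have := Finset.min'_mem _ hne
      rw [Finset.mem_filter] at this
      exact this.2
    have hlow : ∀ t, t < s0 → a t = 0 := by
      intro t ht
      by_contra hat
      have h2 : s0 ≤ t := Finset.min'_le _ _ (by simp [hat])
      exact absurd (lt_of_lt_of_le ht h2) (lt_irrefl t)
    rw [Fintype.sum_eq_single (Sum.inr (s0, ⟨a s0, hs0⟩) : Idx p m)]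
    · simp only [Sum.elim_inr, F]
      have h1 : chi s0 (a s0) a = 1 := by
        unfold chi
        rw [if_pos ⟨rfl, hlow⟩]
      rw [h1, mul_one]
      exact connect hc s0 (a s0) hs0 a rfl hlow
    · intro i hi
      rcases i with _ | ⟨s, r, hr⟩
      · simp only [Sum.elim_inl, F]
        unfold d0
        rw [if_neg ha, mul_zero]
      · simp only [Sum.elim_inr, F]
        unfold chi
        rw [if_neg, mul_zero]
        rintro ⟨h1, h2⟩
        have hle : s0 ≤ s := Finset.min'_le _ _ (by simp [h1, hr])
        have hnlt : ¬ s0 < s := fun hlt => hs0 (h2 s0 hlt)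
        have hse : s = s0 := le_antisymm (not_lt.1 hnlt) hle
        apply hi
        subst hse
        simp [Subtype.ext_iff, h1]

lemma span_range_F_eq : Submodule.span ℂ (Set.range (F : Idx p m → _)) = Wsub p m := by
  apply le_antisymm
  · rw [Submodule.span_le]
    rintro x ⟨i, rfl⟩
    rcases i with _ | ⟨s, r, hr⟩
    · exact fun j h x => d0_inv j h x
    · exact fun j h x => chi_inv s r j h x
  · intro c hc
    rw [decomp hc]
    exact Submodule.sum_mem _ fun i _ =>
      Submodule.smul_mem _ _ (Submodule.subset_span ⟨i, rfl⟩)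

lemma card_Idx : Fintype.card (Idx p m) = m * (p - 1) + 1 := by
  have h1 : Fintype.card {r : ZMod p // r ≠ 0} = p - 1 := by
    have h2 := Fintype.card_subtype_compl (fun r : ZMod p => r = 0)
    rw [Fintype.card_subtype_eq (0 : ZMod p), ZMod.card p] at h2
    exact h2
  rw [show Fintype.card (Idx p m) =
    Fintype.card Unit + Fintype.card (Fin m × {r : ZMod p // r ≠ 0}) from
      Fintype.card_sum, Fintype.card_prod, h1, Fintype.card_fin, Fintype.card_unit]
  omega

end Indicators

end Stmt7

set_option maxHeartbeats 1000000
set_option synthInstance.maxHeartbeats 400000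
open Stmt7

/-- Commutant of the quasiregular representation of the infinite unitriangular
group over `F_p` on `X¹` with invariant measure, finite level: a linear
endomorphism `A` of the functions on `(ZMod p)^m` commutes with all the shifts
`S_j` and with the operators `U_j` if and only if it lies in the span of the
identity together with the operators `S_s^r ∘ C_{s+1} ∘ ⋯ ∘ C_{m-1}`,
`r ∈ F_p \ {0}`; this commutant has dimension `m(p-1) + 1`. -/
theorem stmt7 (p m : ℕ) [Fact p.Prime] (hm : 1 ≤ m)
    (S : Fin m → Module.End ℂ ((Fin m → ZMod p) → ℂ))
    (hS : ∀ (j : Fin m) (f : (Fin m → ZMod p) → ℂ) (x : Fin m → ZMod p),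
      S j f x = f (x - Pi.single j 1))
    (U : Fin m → Module.End ℂ ((Fin m → ZMod p) → ℂ))
    (hU : ∀ (j : Fin m) (h : (j : ℕ) + 1 < m) (f : (Fin m → ZMod p) → ℂ)
      (x : Fin m → ZMod p),
      U j f x = f (x - Pi.single (⟨(j : ℕ) + 1, h⟩ : Fin m) (x j)))
    (C : Fin m → Module.End ℂ ((Fin m → ZMod p) → ℂ))
    (hC : ∀ j : Fin m, C j = ∑ r : ZMod p, S j ^ (r.val)) :
    (∀ A : Module.End ℂ ((Fin m → ZMod p) → ℂ),
      ((∀ j : Fin m, A * S j = S j * A) ∧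
        (∀ (j : Fin m), (j : ℕ) + 1 < m → A * U j = U j * A)) ↔
      A ∈ Submodule.span ℂ
        ({1} ∪ {g : Module.End ℂ ((Fin m → ZMod p) → ℂ) |
          ∃ (s : Fin m) (r : ZMod p), r ≠ 0 ∧
            g = S s ^ (r.val) * prodFrom C ((s : ℕ) + 1)})) ∧
    Module.finrank ℂ
      (Submodule.span ℂ
        ({1} ∪ {g : Module.End ℂ ((Fin m → ZMod p) → ℂ) |
          ∃ (s : Fin m) (r : ZMod p), r ≠ 0 ∧
            g = S s ^ (r.val) * prodFrom C ((s : ℕ) + 1)}))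
      = m * (p - 1) + 1 := by

  haveI : NeZero p := ⟨(Fact.out : p.Prime).ne_zero⟩
  have hS' : ∀ j : Fin m, S j = T (Pi.single j (1 : ZMod p)) := fun j =>
    LinearMap.ext fun f => funext fun x => hS j f x
  have hSpow : ∀ (s : Fin m) (r : ZMod p), S s ^ (r.val) = T (Pi.single s r) := by
    intro s r
    rw [hS' s, T_pow]
    congr 1
    rw [show Pi.single s r = (Pi.single s ((r.val : ℕ) • (1 : ZMod p)) : Fin m → ZMod p) by
      congr 1
      simp [nsmul_eq_mul, ZMod.natCast_val, ZMod.cast_id], Pi.single_smul]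
  have hC' : ∀ j : Fin m, C j = ∑ v : ZMod p, T (Pi.single j v) := by
    intro j
    rw [hC j]
    exact Finset.sum_congr rfl fun v _ => hSpow j v
  have hprod : ∀ t, prodFrom C t = Phi (w t) := prodFrom_eq_Phi_w C hC'
  have hU' : ∀ (j : Fin m) (h : (j : ℕ) + 1 < m), U j = Uop j h := fun j h =>
    LinearMap.ext fun f => funext fun x => hU j h f x
  have hgen : ∀ (s : Fin m) (r : ZMod p),
      S s ^ (r.val) * prodFrom C ((s : ℕ) + 1) = Phi (chi s r) := by
    intro s r
    rw [hSpow, hprod, Phi_chi]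
  have hGen : ({1} ∪ {g : Module.End ℂ ((Fin m → ZMod p) → ℂ) |
          ∃ (s : Fin m) (r : ZMod p), r ≠ 0 ∧
            g = S s ^ (r.val) * prodFrom C ((s : ℕ) + 1)})
      = ⇑Phi '' Set.range (F : Idx p m → _) := by
    ext g
    simp only [Set.mem_union, Set.mem_singleton_iff, Set.mem_setOf_eq, Set.mem_image,
      Set.mem_range, exists_exists_eq_and]
    constructor
    · rintro (rfl | ⟨s, r, hr, rfl⟩)
      · exact ⟨Sum.inl (), Phi_d0⟩
      · exact ⟨Sum.inr (s, ⟨r, hr⟩), (hgen s r).symm⟩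
    · rintro ⟨i, rfl⟩
      rcases i with _ | ⟨s, r, hr⟩
      · left
        exact Phi_d0
      · right
        exact ⟨s, r, hr, (hgen s r).symm⟩
  constructor
  · intro A
    constructor
    · rintro ⟨h1, h2⟩
      have hcomm : ∀ a, Commute A (T a) :=
        commute_T_of A (fun j => by rw [← hS' j]; exact h1 j)
      have hA : A = Phi (A (dd 0)) := A_eq_Phi A hcomm
      have hcinv : ∀ (j : Fin m) (h : (j : ℕ) + 1 < m) (x),
          (A (dd 0)) (tau j h x) = (A (dd 0)) x := by
        intro j h x
        refine inv_of_comm j h _ ?_ x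
        rw [← hA, ← hU' j h]
        exact h2 j h
      have hmem : A (dd 0) ∈ Submodule.span ℂ (Set.range (F : Idx p m → _)) := by
        rw [span_range_F_eq]
        exact hcinv
      rw [hGen, Submodule.span_image]
      exact ⟨A (dd 0), hmem, hA.symm⟩
    · intro hA
      rw [hGen, Submodule.span_image] at hA
      obtain ⟨c, hc, rfl⟩ := hA
      have hcinv : ∀ (j : Fin m) (h : (j : ℕ) + 1 < m) (x), c (tau j h x) = c x := by
        rw [span_range_F_eq] at hc
        exact hc
      constructor
      · intro j
        rw [hS' j]
        exact Phi_comm_T c _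
      · intro j h
        rw [hU' j h]
        exact Phi_mul_Uop_of_inv j h c (hcinv j h)
  · have e := Submodule.equivMapOfInjective
      (Phi : ((Fin m → ZMod p) → ℂ) →ₗ[ℂ] Module.End ℂ ((Fin m → ZMod p) → ℂ))
      Phi_injective (Submodule.span ℂ (Set.range (F : Idx p m → _)))
    have h1 : Module.finrank ℂ
        (Submodule.map (Phi : ((Fin m → ZMod p) → ℂ) →ₗ[ℂ] _)
          (Submodule.span ℂ (Set.range (F : Idx p m → _))))
        = Module.finrank ℂ (Submodule.span ℂ (Set.range (F : Idx p m → _))) :=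
      (e.finrank_eq).symm
    rw [hGen, Submodule.span_image, h1, finrank_span_eq_card F_li, card_Idx]
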